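/- Let T > 0 and let α : [0,T] → (0,1) be Lipschitz continuous. Then there exists a constant C ∈ (0,∞), independent of τ and of ℓ, such that for every τ ∈ (0, T] and every twice continuously differentiable function ℓ : [0, τ] → ℝ, setting β := α(τ/2) and s₀ := 2^{1−β}·τ^{β}·Γ(2−β), one has | (1/Γ(1−β)) · ∫_{0}^{τ/2} ℓ'(s)·(τ/2 − s)^{−β} ds − (ℓ(τ) − ℓ(0))/s₀ | ≤ C · ( sup_{s∈[0,τ]} |ℓ''(s)| ) · τ^{2−β}. -/

import Mathlib

open intervalIntegral MeasureTheory Set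

/-- Positive lower bound for Γ on [1,2]. -/
lemma gamma_lower_bound : ∃ c > (0:ℝ), ∀ x ∈ Set.Icc (1:ℝ) 2, c ≤ Real.Gamma x := by
  have hc : ContinuousOn Real.Gamma (Set.Icc (1:ℝ) 2) := by
    intro x hx
    have : DifferentiableAt ℝ Real.Gamma x := by
      refine Real.differentiableAt_Gamma fun m => ?_
      have : (0:ℝ) ≤ m := Nat.cast_nonneg m
      intro h; rw [h] at hx; have := hx.1; linarith
    exact this.continuousAt.continuousWithinAt
  obtain ⟨x₀, hx₀, hmin⟩ := isCompact_Icc.exists_isMinOn ⟨1, by norm_num⟩ hc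
  exact ⟨Real.Gamma x₀, Real.Gamma_pos_of_pos (by linarith [hx₀.1]), fun x hx => hmin hx⟩

theorem stmt_15 (T L : ℝ) (α : ℝ → ℝ)
    (hT : 0 < T) (hL : 0 ≤ L)
    (hrange : ∀ t ∈ Set.Icc (0 : ℝ) T, α t ∈ Set.Ioo (0 : ℝ) 1)
    (hLip : ∀ s ∈ Set.Icc (0 : ℝ) T, ∀ t ∈ Set.Icc (0 : ℝ) T,
      |α s - α t| ≤ L * |s - t|) :
    ∃ C > (0 : ℝ), ∀ τ ∈ Set.Ioc (0 : ℝ) T, ∀ ℓ ℓ' ℓ'' : ℝ → ℝ,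
      (∀ s ∈ Set.Icc (0 : ℝ) τ, HasDerivWithinAt ℓ (ℓ' s) (Set.Icc (0 : ℝ) τ) s) →
      (∀ s ∈ Set.Icc (0 : ℝ) τ, HasDerivWithinAt ℓ' (ℓ'' s) (Set.Icc (0 : ℝ) τ) s) →
      ContinuousOn ℓ'' (Set.Icc (0 : ℝ) τ) →
      ∀ M : ℝ, (∀ s ∈ Set.Icc (0 : ℝ) τ, |ℓ'' s| ≤ M) →
        |(1 / Real.Gamma (1 - α (τ / 2))) *
            (∫ s in (0 : ℝ)..(τ / 2), ℓ' s * (τ / 2 - s) ^ (-(α (τ / 2)))) -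
          (ℓ τ - ℓ 0) /
            ((2 : ℝ) ^ (1 - α (τ / 2)) * τ ^ (α (τ / 2)) *
              Real.Gamma (2 - α (τ / 2)))| ≤
          C * M * τ ^ (2 - α (τ / 2)) := by
  obtain ⟨c, hc0, hcΓ⟩ := gamma_lower_bound
  refine ⟨1 / c, by positivity, ?_⟩
  rintro τ ⟨hτ0, hτT⟩ ℓ ℓ' ℓ'' hd1 hd2 hcont'' M hM
  set β := α (τ / 2) with hβdef
  have hmem : τ / 2 ∈ Set.Icc (0:ℝ) T := ⟨by linarith, by linarith⟩
  obtain ⟨hβ0, hβ1⟩ := hrange _ hmem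
  have h1β : (0:ℝ) < 1 - β := by linarith
  have hΓ1 : 0 < Real.Gamma (1 - β) := Real.Gamma_pos_of_pos h1β
  have hΓ2 : 0 < Real.Gamma (2 - β) := Real.Gamma_pos_of_pos (by linarith)
  have hΓ21 : Real.Gamma (2 - β) = (1 - β) * Real.Gamma (1 - β) := by
    have : (2:ℝ) - β = (1 - β) + 1 := by ring
    rw [this, Real.Gamma_add_one h1β.ne']
  -- continuity of ℓ and ℓ'
  have hcontℓ : ContinuousOn ℓ (Set.Icc (0:ℝ) τ) :=
    fun s hs => (hd1 s hs).continuousWithinAt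
  have hcontℓ' : ContinuousOn ℓ' (Set.Icc (0:ℝ) τ) :=
    fun s hs => (hd2 s hs).continuousWithinAt
  have hM0 : 0 ≤ M := le_trans (abs_nonneg _) (hM 0 ⟨le_refl _, hτ0.le⟩)
  -- FTC : ℓ τ - ℓ 0 = ∫ ℓ'
  have hftc : (∫ u in (0:ℝ)..τ, ℓ' u) = ℓ τ - ℓ 0 := by
    apply integral_eq_sub_of_hasDeriv_right_of_le hτ0.le hcontℓ
    · intro x hx
      have : HasDerivAt ℓ (ℓ' x) x :=
        (hd1 x (Ioo_subset_Icc_self hx)).hasDerivAt (Icc_mem_nhds hx.1 hx.2)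
      exact this.hasDerivWithinAt
    · exact (hcontℓ'.mono (by rw [uIcc_of_le hτ0.le])).intervalIntegrable
  set D := (ℓ τ - ℓ 0) / τ with hD
  -- Lipschitz bound on ℓ' with constant M
  have hlip : ∀ s ∈ Set.Icc (0:ℝ) τ, ∀ u ∈ Set.Icc (0:ℝ) τ, |ℓ' s - ℓ' u| ≤ M * τ := by
    intro s hs u hu
    have := (convex_Icc (0:ℝ) τ).norm_image_sub_le_of_norm_hasDerivWithin_le
      hd2 (fun x hx => by simpa using hM x hx) hu hs
    have habs : |s - u| ≤ τ := by
      rw [abs_sub_le_iff]; constructor <;> [linarith [hs.2, hu.1]; linarith [hu.2, hs.1]]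
    calc |ℓ' s - ℓ' u| ≤ M * |s - u| := by simpa [Real.norm_eq_abs] using this
      _ ≤ M * τ := by nlinarith [abs_nonneg (s - u)]
  -- |ℓ' s - D| ≤ M τ for s ∈ [0, τ]
  have hkey : ∀ s ∈ Set.Icc (0:ℝ) τ, |ℓ' s - D| ≤ M * τ := by
    intro s hs
    have hint : (∫ u in (0:ℝ)..τ, (ℓ' s - ℓ' u)) = ℓ' s * τ - (ℓ τ - ℓ 0) := by
      rw [integral_sub intervalIntegrable_const
        ((hcontℓ'.mono (by rw [uIcc_of_le hτ0.le])).intervalIntegrable), hftc]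
      simp [mul_comm]
    have hbnd : |∫ u in (0:ℝ)..τ, (ℓ' s - ℓ' u)| ≤ M * τ * |τ - 0| := by
      rw [← Real.norm_eq_abs]
      apply intervalIntegral.norm_integral_le_of_norm_le_const
      intro u hu
      have hu' : u ∈ Set.Icc (0:ℝ) τ := by
        rw [uIoc_of_le hτ0.le] at hu; exact ⟨hu.1.le, hu.2⟩
      simpa [Real.norm_eq_abs] using hlip s hs u hu'
    rw [hint] at hbnd
    have : |ℓ' s * τ - (ℓ τ - ℓ 0)| ≤ M * τ * τ := by
      simpa [abs_of_pos hτ0] using hbnd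
    have heq : ℓ' s - D = (ℓ' s * τ - (ℓ τ - ℓ 0)) / τ := by
      rw [hD]; field_simp
    rw [heq, abs_div, abs_of_pos hτ0, div_le_iff₀ hτ0]
    nlinarith [this]
  -- weight function and its integral
  set w : ℝ → ℝ := fun s => (τ / 2 - s) ^ (-β) with hw
  have hτ2 : (0:ℝ) < τ / 2 := by linarith
  have hwint : IntervalIntegrable w volume 0 (τ / 2) := by
    have h := (intervalIntegrable_rpow' (a := 0) (b := τ / 2) (r := -β)
      (by linarith)).comp_sub_left (τ / 2)
    simpa using h.symm
  have hJ : (∫ s in (0:ℝ)..(τ / 2), w s) = (τ / 2) ^ (1 - β) / (1 - β) := by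
    rw [hw]
    rw [integral_comp_sub_left (fun s => s ^ (-β)) (τ / 2)]
    simp only [sub_self, sub_zero]
    rw [integral_rpow (Or.inl (by linarith))]
    rw [Real.zero_rpow (by linarith)]
    norm_num
    ring_nf
  have hwnonneg : ∀ s ∈ Set.Ioc (0:ℝ) (τ / 2), 0 ≤ w s := by
    intro s hs
    exact Real.rpow_nonneg (by linarith [hs.2]) _
  have hJnonneg : 0 ≤ (τ / 2) ^ (1 - β) / (1 - β) := by positivity
  -- the approximation term equals (1/Γ(1-β)) * (D * ∫ w)
  have happrox : (ℓ τ - ℓ 0) /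
      ((2 : ℝ) ^ (1 - β) * τ ^ β * Real.Gamma (2 - β)) =
      (1 / Real.Gamma (1 - β)) * (D * ((τ / 2) ^ (1 - β) / (1 - β))) := by
    rw [hD, hΓ21]
    have h2pos : (0:ℝ) < (2:ℝ) ^ (1 - β) := Real.rpow_pos_of_pos (by norm_num) _
    have hτβpos : (0:ℝ) < τ ^ β := Real.rpow_pos_of_pos hτ0 _
    have hppos : (0:ℝ) < (τ / 2) ^ (1 - β) := Real.rpow_pos_of_pos hτ2 _
    have hkey2 : (τ / 2) ^ (1 - β) * ((2:ℝ) ^ (1 - β) * τ ^ β) = τ := by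
      rw [Real.div_rpow hτ0.le (by norm_num : (0:ℝ) ≤ 2)]
      rw [div_mul_eq_mul_div, mul_comm ((2:ℝ) ^ (1 - β)) (τ ^ β), ← mul_assoc,
        mul_div_assoc, div_self h2pos.ne', mul_one, ← Real.rpow_add hτ0]
      norm_num
    field_simp
    linear_combination -(ℓ τ - ℓ 0) * hkey2
  -- integrability of ℓ' * w on [0, τ/2]
  have hsub : Set.uIcc (0:ℝ) (τ / 2) ⊆ Set.Icc (0:ℝ) τ := by
    rw [uIcc_of_le hτ2.le]; exact Icc_subset_Icc le_rfl (by linarith)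
  have hℓ'wint : IntervalIntegrable (fun s => ℓ' s * w s) volume 0 (τ / 2) :=
    hwint.continuousOn_mul (hcontℓ'.mono hsub)
  have hDwint : IntervalIntegrable (fun s => D * w s) volume 0 (τ / 2) :=
    hwint.const_mul D
  -- rewrite LHS difference
  have hdiff : (1 / Real.Gamma (1 - β)) *
      (∫ s in (0:ℝ)..(τ / 2), ℓ' s * w s) -
      (ℓ τ - ℓ 0) / ((2 : ℝ) ^ (1 - β) * τ ^ β * Real.Gamma (2 - β)) =
      (1 / Real.Gamma (1 - β)) *
      (∫ s in (0:ℝ)..(τ / 2), (ℓ' s - D) * w s) := by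
    rw [happrox, ← hJ, ← mul_sub]
    congr 1
    rw [← intervalIntegral.integral_const_mul, ← integral_sub hℓ'wint hDwint]
    congr 1; ext s; ring
  -- main estimate
  have hest : |∫ s in (0:ℝ)..(τ / 2), (ℓ' s - D) * w s| ≤
      M * τ * ((τ / 2) ^ (1 - β) / (1 - β)) := by
    have hb : |∫ s in (0:ℝ)..(τ / 2), (ℓ' s - D) * w s| ≤
        |∫ s in (0:ℝ)..(τ / 2), M * τ * w s| := by
      rw [← Real.norm_eq_abs]
      apply intervalIntegral.norm_integral_le_abs_of_norm_le _ (hwint.const_mul (M * τ))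
      refine (MeasureTheory.ae_restrict_mem measurableSet_uIoc).mono fun s hs => ?_
      rw [uIoc_of_le hτ2.le] at hs
      have hs' : s ∈ Set.Icc (0:ℝ) τ := ⟨hs.1.le, by linarith [hs.2]⟩
      rw [Real.norm_eq_abs, abs_mul, abs_of_nonneg (hwnonneg s hs)]
      exact mul_le_mul_of_nonneg_right (hkey s hs') (hwnonneg s hs)
    calc |∫ s in (0:ℝ)..(τ / 2), (ℓ' s - D) * w s|
        ≤ |∫ s in (0:ℝ)..(τ / 2), M * τ * w s| := hb
      _ = M * τ * ((τ / 2) ^ (1 - β) / (1 - β)) := by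
          rw [intervalIntegral.integral_const_mul, hJ, abs_of_nonneg (by positivity)]
  -- put it together
  rw [hdiff, abs_mul, abs_of_nonneg (by positivity : (0:ℝ) ≤ 1 / Real.Gamma (1 - β))]
  have hstep : (1 / Real.Gamma (1 - β)) * (M * τ * ((τ / 2) ^ (1 - β) / (1 - β))) ≤
      1 / c * M * τ ^ (2 - β) := by
    have h2m : (2:ℝ) - β ∈ Set.Icc (1:ℝ) 2 := ⟨by linarith, by linarith⟩
    have hcΓ2 : c ≤ Real.Gamma (2 - β) := hcΓ _ h2m
    have hτ2b : (τ / 2) ^ (1 - β) ≤ τ ^ (1 - β) :=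
      Real.rpow_le_rpow (by linarith) (by linarith) (by linarith)
    have hττ : τ * τ ^ (1 - β) = τ ^ (2 - β) := by
      nth_rewrite 1 [← Real.rpow_one τ]
      rw [← Real.rpow_add hτ0]
      congr 1; ring
    have hτ2bpos : (0:ℝ) < τ ^ (2 - β) := Real.rpow_pos_of_pos hτ0 _
    have lhs_eq : (1 / Real.Gamma (1 - β)) * (M * τ * ((τ / 2) ^ (1 - β) / (1 - β))) =
        M * (τ * (τ / 2) ^ (1 - β)) / Real.Gamma (2 - β) := by
      rw [hΓ21]; rw [eq_div_iff (by positivity)]; field_simp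
    rw [lhs_eq]
    have h1 : M * (τ * (τ / 2) ^ (1 - β)) ≤ M * τ ^ (2 - β) := by
      rw [← hττ]
      exact mul_le_mul_of_nonneg_left
        (mul_le_mul_of_nonneg_left hτ2b hτ0.le) hM0
    calc M * (τ * (τ / 2) ^ (1 - β)) / Real.Gamma (2 - β)
        ≤ M * τ ^ (2 - β) / Real.Gamma (2 - β) :=
          div_le_div_of_nonneg_right h1 hΓ2.le
      _ ≤ M * τ ^ (2 - β) / c :=
          div_le_div_of_nonneg_left (by positivity) hc0 hcΓ2
      _ = 1 / c * M * τ ^ (2 - β) := by ring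
  calc (1 / Real.Gamma (1 - β)) * |∫ s in (0:ℝ)..(τ / 2), (ℓ' s - D) * w s|
      ≤ (1 / Real.Gamma (1 - β)) * (M * τ * ((τ / 2) ^ (1 - β) / (1 - β))) :=
        mul_le_mul_of_nonneg_left hest (by positivity)
    _ ≤ 1 / c * M * τ ^ (2 - β) := hstep
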